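/- arXiv:1812.00673 — 2 statements merged into one kernel-verified Lean document; each statement's English description precedes it below -/
import Mathlib

section
/- If f ∈ C[0,T] ∩ C¹[0,T] attains its minimum over the interval [0,T] at a point t₀ ∈ (0,T], then the Caputo fractional derivative of f of order α at t₀ satisfies (₀D_t^α f)(t₀) ≤ 0. -/
open MeasureTheory Set

noncomputable section

/-- The Caputo fractional derivative of order `α`:
`(₀D_t^α f)(t) = (1 / Γ(1-α)) ∫₀^t (t - s)^(-α) f'(s) ds`. -/
def caputo (α : ℝ) (f : ℝ → ℝ) (t : ℝ) : ℝ :=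
  (1 / Real.Gamma (1 - α)) * ∫ s in Ioo (0:ℝ) t, (t - s) ^ (-α) * deriv f s

/-- If `f ∈ C[0,T] ∩ C¹[0,T]` attains its minimum over `[0,T]` at a point `t₀ ∈ (0,T]`,
then the Caputo fractional derivative of order `α ∈ (0,1)` of `f` at `t₀` is nonpositive. -/
theorem caputo_deriv_nonpos_at_min
    (T α : ℝ) (hT : 0 < T) (hα : α ∈ Ioo (0:ℝ) 1)
    (f : ℝ → ℝ)
    (hf_cont : ContinuousOn f (Icc (0:ℝ) T))
    (hf_C1 : ContDiffOn ℝ 1 f (Icc (0:ℝ) T))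
    (t₀ : ℝ) (ht₀ : t₀ ∈ Ioc (0:ℝ) T)
    (hmin : ∀ t ∈ Icc (0:ℝ) T, f t₀ ≤ f t) :
    caputo α f t₀ ≤ 0 := by
  obtain ⟨hα0, hα1⟩ := hα
  obtain ⟨ht0, htT⟩ := ht₀
  have ht₀T : t₀ ∈ Icc (0:ℝ) T := ⟨ht0.le, htT⟩
  have hsub : Icc (0:ℝ) t₀ ⊆ Icc 0 T := Icc_subset_Icc le_rfl htT
  have hsubIoo : Ioo (0:ℝ) t₀ ⊆ Icc 0 T := fun s hs => ⟨hs.1.le, hs.2.le.trans htT⟩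
  -- bound on the derivative
  have hud : UniqueDiffOn ℝ (Icc (0:ℝ) T) := uniqueDiffOn_Icc hT
  have hdc : ContinuousOn (derivWithin f (Icc (0:ℝ) T)) (Icc (0:ℝ) T) :=
    hf_C1.continuousOn_derivWithin hud le_rfl
  obtain ⟨K, hK⟩ := isCompact_Icc.exists_bound_of_continuousOn hdc
  -- Lipschitz bound
  have hlip : ∀ s ∈ Icc (0:ℝ) T, |f s - f t₀| ≤ K * |s - t₀| := by
    intro s hs
    have := Convex.norm_image_sub_le_of_norm_derivWithin_le
      (hf_C1.differentiableOn one_ne_zero) hK (convex_Icc _ _) ht₀T hs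
    simpa [Real.norm_eq_abs] using this
  -- differentiability at interior points
  have hdiff : ∀ s ∈ Ioo (0:ℝ) t₀, HasDerivAt f (deriv f s) s ∧
      deriv f s = derivWithin f (Icc (0:ℝ) T) s := by
    intro s hs
    have hnhds : Icc (0:ℝ) T ∈ nhds s :=
      Icc_mem_nhds hs.1 (hs.2.trans_le htT)
    have hda : DifferentiableAt ℝ f s :=
      (hf_C1.differentiableOn one_ne_zero s (hsubIoo hs)).differentiableAt hnhds
    exact ⟨hda.hasDerivAt, (hda.derivWithin (hud s (hsubIoo hs))).symm⟩
  have hderiv_bd : ∀ s ∈ Ioo (0:ℝ) t₀, |deriv f s| ≤ K := by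
    intro s hs
    rw [(hdiff s hs).2]
    simpa [Real.norm_eq_abs] using hK s (hsubIoo hs)
  have hK0 : 0 ≤ K := le_trans (abs_nonneg _) (hK t₀ ht₀T)
  -- the auxiliary function and its derivative
  set g : ℝ → ℝ := fun s => (t₀ - s) ^ (-α) * (f s - f t₀) with hg
  set G : ℝ → ℝ := fun s =>
    α * (t₀ - s) ^ (-α - 1) * (f s - f t₀) + (t₀ - s) ^ (-α) * deriv f s with hG
  have hgderiv : ∀ s ∈ Ioo (0:ℝ) t₀, HasDerivAt g (G s) s := by
    intro s hs
    have hpos : 0 < t₀ - s := by linarith [hs.2]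
    have hb : HasDerivAt (fun x : ℝ => t₀ - x) (-1) s := (hasDerivAt_id s).const_sub t₀
    have h1 : HasDerivAt (fun x : ℝ => (t₀ - x) ^ (-α))
        ((-1) * (-α) * (t₀ - s) ^ (-α - 1)) s := hb.rpow_const (Or.inl hpos.ne')
    have h2 : HasDerivAt (fun x => f x - f t₀) (deriv f s) s :=
      ((hdiff s hs).1).sub_const _
    have hmul : HasDerivAt (fun x => (t₀ - x) ^ (-α) * (f x - f t₀))
        ((-1) * (-α) * (t₀ - s) ^ (-α - 1) * (f s - f t₀) + (t₀ - s) ^ (-α) * deriv f s) s :=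
      h1.mul h2
    convert hmul using 1
    show G s = _
    simp only [hG]
    ring
  -- nonnegativity of the extra term
  have hfge : ∀ s ∈ Ioo (0:ℝ) t₀, 0 ≤ f s - f t₀ := fun s hs =>
    sub_nonneg.2 (hmin s (hsubIoo hs))
  -- integrability of the basic kernel
  have hbase : IntegrableOn (fun s => (t₀ - s) ^ (-α)) (Ioo (0:ℝ) t₀) := by
    have h1 : IntervalIntegrable (fun x : ℝ => x ^ (-α)) volume 0 t₀ :=
      intervalIntegral.intervalIntegrable_rpow' (by linarith)
    have h2 := h1.comp_sub_left t₀
    simp only [sub_zero, sub_self] at h2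
    have := (intervalIntegrable_iff_integrableOn_Ioc_of_le ht0.le).1 h2.symm
    exact this.mono_set Ioo_subset_Ioc_self
  have hbaseK : IntegrableOn (fun s => K * (t₀ - s) ^ (-α)) (Ioo (0:ℝ) t₀) :=
    hbase.const_mul K
  -- measurability helpers
  have hcontIoo : ContinuousOn (fun s => (t₀ - s) ^ (-α)) (Ioo (0:ℝ) t₀) := by
    intro s hs
    have hpos : 0 < t₀ - s := by linarith [hs.2]
    exact ((Real.continuousAt_rpow_const _ _ (Or.inl hpos.ne')).comp
      (continuousAt_const.sub continuousAt_id)).continuousWithinAt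
  have hmeasIoo : MeasurableSet (Ioo (0:ℝ) t₀) := measurableSet_Ioo
  have hfmeas : AEStronglyMeasurable f (volume.restrict (Ioo (0:ℝ) t₀)) :=
    (hf_cont.mono hsubIoo).aestronglyMeasurable hmeasIoo
  have hkermeas : AEStronglyMeasurable (fun s => (t₀ - s) ^ (-α))
      (volume.restrict (Ioo (0:ℝ) t₀)) := hcontIoo.aestronglyMeasurable hmeasIoo
  -- integrability of the Caputo integrand
  have hint1 : IntegrableOn (fun s => (t₀ - s) ^ (-α) * deriv f s) (Ioo (0:ℝ) t₀) := by
    refine hbaseK.mono' ?_ ?_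
    · exact hkermeas.mul (measurable_deriv f).aestronglyMeasurable.restrict
    · refine (ae_restrict_iff' hmeasIoo).2 (ae_of_all _ fun s hs => ?_)
      have hpos : 0 < t₀ - s := by linarith [hs.2]
      have hrp : (0:ℝ) ≤ (t₀ - s) ^ (-α) := (Real.rpow_pos_of_pos hpos _).le
      rw [Real.norm_eq_abs, abs_mul, abs_of_nonneg hrp, mul_comm K]
      exact mul_le_mul_of_nonneg_left (hderiv_bd s hs) hrp
  -- integrability of the extra term
  have hint2 : IntegrableOn
      (fun s => α * (t₀ - s) ^ (-α - 1) * (f s - f t₀)) (Ioo (0:ℝ) t₀) := by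
    have hbaseαK : IntegrableOn (fun s => α * K * (t₀ - s) ^ (-α)) (Ioo (0:ℝ) t₀) :=
      hbase.const_mul (α * K)
    refine hbaseαK.mono' ?_ ?_
    · have hcont2 : ContinuousOn (fun s => α * (t₀ - s) ^ (-α - 1)) (Ioo (0:ℝ) t₀) := by
        refine continuousOn_const.mul ?_
        intro s hs
        have hpos : 0 < t₀ - s := by linarith [hs.2]
        exact ((Real.continuousAt_rpow_const _ _ (Or.inl hpos.ne')).comp
          (continuousAt_const.sub continuousAt_id)).continuousWithinAt
      exact (hcont2.aestronglyMeasurable hmeasIoo).mul (hfmeas.sub aestronglyMeasurable_const)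
    · refine (ae_restrict_iff' hmeasIoo).2 (ae_of_all _ fun s hs => ?_)
      have hpos : 0 < t₀ - s := by linarith [hs.2]
      have hfs : |f s - f t₀| ≤ K * (t₀ - s) := by
        have := hlip s (hsubIoo hs)
        rwa [abs_of_nonpos (by linarith [hs.2] : s - t₀ ≤ 0), neg_sub] at this
      have hrp : (0:ℝ) ≤ (t₀ - s) ^ (-α - 1) := (Real.rpow_pos_of_pos hpos _).le
      rw [Real.norm_eq_abs, abs_mul, abs_mul, abs_of_nonneg hα0.le, abs_of_nonneg hrp]
      calc α * (t₀ - s) ^ (-α - 1) * |f s - f t₀|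
          ≤ α * (t₀ - s) ^ (-α - 1) * (K * (t₀ - s)) :=
            mul_le_mul_of_nonneg_left hfs (by positivity)
        _ = α * K * ((t₀ - s) ^ (-α - 1) * (t₀ - s) ^ (1:ℝ)) := by
            rw [Real.rpow_one]; ring
        _ = α * K * (t₀ - s) ^ (-α) := by
            rw [← Real.rpow_add hpos]; norm_num
  have hintG : IntegrableOn G (Ioo (0:ℝ) t₀) := hint2.add hint1
  -- continuity of g on [0, t₀]
  have hg_t₀ : g t₀ = 0 := by simp [hg, Real.zero_rpow (by linarith : -α ≠ 0)]
  have hgcont : ContinuousOn g (Icc (0:ℝ) t₀) := by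
    intro x hx
    rcases eq_or_lt_of_le hx.2 with hxe | hxlt
    · -- continuity at t₀ via squeeze
      rw [hxe, ContinuousWithinAt, hg_t₀]
      apply squeeze_zero_norm' (a := fun s => K * (t₀ - s) ^ (1 - α))
      · refine Filter.eventually_of_mem self_mem_nhdsWithin fun s hs => ?_
        rcases eq_or_lt_of_le hs.2 with he | hlt
        · subst he
          simp [hg, Real.zero_rpow (by linarith : -α ≠ 0),
            Real.zero_rpow (by linarith : (1:ℝ) - α ≠ 0)]
        · have hpos : 0 < t₀ - s := by linarith
          have hfs : |f s - f t₀| ≤ K * (t₀ - s) := by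
            have := hlip s (hsub hs)
            rwa [abs_of_nonpos (by linarith : s - t₀ ≤ 0), neg_sub] at this
          have hrp : (0:ℝ) ≤ (t₀ - s) ^ (-α) := (Real.rpow_pos_of_pos hpos _).le
          rw [Real.norm_eq_abs, hg, abs_mul, abs_of_nonneg hrp]
          calc (t₀ - s) ^ (-α) * |f s - f t₀|
              ≤ (t₀ - s) ^ (-α) * (K * (t₀ - s)) :=
                mul_le_mul_of_nonneg_left hfs hrp
            _ = K * ((t₀ - s) ^ (-α) * (t₀ - s) ^ (1:ℝ)) := by
                rw [Real.rpow_one]; ring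
            _ = K * (t₀ - s) ^ (1 - α) := by
                rw [← Real.rpow_add hpos, neg_add_eq_sub]
      · have hc : ContinuousAt (fun s : ℝ => K * (t₀ - s) ^ (1 - α)) t₀ := by
          refine continuousAt_const.mul ?_
          exact (Real.continuousAt_rpow_const _ _ (Or.inr (by linarith))).comp
            (continuousAt_const.sub continuousAt_id)
        have := hc.continuousWithinAt (s := Icc (0:ℝ) t₀)
        simpa [Real.zero_rpow (by linarith : (1:ℝ) - α ≠ 0)] using this.tendsto
    · -- continuity at interior/left points
      have hpos : 0 < t₀ - x := by linarith
      refine ContinuousWithinAt.mul ?_ ?_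
      · exact ((Real.continuousAt_rpow_const _ _ (Or.inl hpos.ne')).comp
          (continuousAt_const.sub continuousAt_id)).continuousWithinAt
      · exact ((hf_cont.mono hsub) x hx).sub continuousWithinAt_const
  -- FTC
  have hIoc : IntegrableOn G (Ioc (0:ℝ) t₀) :=
    hintG.congr_set_ae Ioo_ae_eq_Ioc.symm
  have hGint : IntervalIntegrable G volume 0 t₀ :=
    (intervalIntegrable_iff_integrableOn_Ioc_of_le ht0.le).2 hIoc
  have hFTC : ∫ s in (0:ℝ)..t₀, G s = g t₀ - g 0 :=
    intervalIntegral.integral_eq_sub_of_hasDeriv_right_of_le ht0.le hgcont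
      (fun x hx => ((hgderiv x hx).hasDerivWithinAt)) hGint
  have hGIoo : ∫ s in Ioo (0:ℝ) t₀, G s = g t₀ - g 0 := by
    rw [← hFTC, intervalIntegral.integral_of_le ht0.le, integral_Ioc_eq_integral_Ioo]
  -- g 0 ≥ 0
  have hg0 : 0 ≤ g 0 := by
    have h1 : (0:ℝ) ≤ (t₀ - 0) ^ (-α) := (Real.rpow_pos_of_pos (by linarith) _).le
    have h2 : 0 ≤ f 0 - f t₀ := sub_nonneg.2 (hmin 0 ⟨le_rfl, hT.le⟩)
    exact mul_nonneg h1 h2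
  -- compare integrals
  have hle : ∫ s in Ioo (0:ℝ) t₀, (t₀ - s) ^ (-α) * deriv f s ≤
      ∫ s in Ioo (0:ℝ) t₀, G s := by
    refine setIntegral_mono_on hint1 hintG hmeasIoo fun s hs => ?_
    have hpos : 0 < t₀ - s := by linarith [hs.2]
    have : 0 ≤ α * (t₀ - s) ^ (-α - 1) * (f s - f t₀) := by
      have := hfge s hs
      positivity
    simp only [hG]
    linarith
  have hint_nonpos : ∫ s in Ioo (0:ℝ) t₀, (t₀ - s) ^ (-α) * deriv f s ≤ 0 := by
    rw [hGIoo, hg_t₀] at hle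
    linarith
  -- conclude
  have hΓ : 0 < Real.Gamma (1 - α) := Real.Gamma_pos_of_pos (by linarith)
  have hΓ' : 0 ≤ 1 / Real.Gamma (1 - α) := by positivity
  exact mul_nonpos_iff.2 (Or.inl ⟨hΓ', hint_nonpos⟩)
end
end

section
/- For a scalar function u: ℝ^d → ℝ, the composition of the nonlocal divergence operator with the tensor Θ and the adjoint operator satisfies D(Θ·D*u)(x) = −2∫_{ℝ^d}(u(y) − u(x)) α(x,y)·(Θ(x,y)·α(x,y)) dy for all x ∈ ℝ^d; consequently, with kernel γ(x,y) = α(x,y)·(Θ(x,y)·α(x,y)), one has −Lu = D(Θ·D*u), where (Lu)(x) = 2∫_{ℝ^d}(u(y) − u(x))γ(x,y)dy. -/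
open MeasureTheory Set Metric

noncomputable section

/-- The adjoint `D*` of the nonlocal divergence operator acting on a scalar function:
`D*(u)(x,y) = -(u(y) - u(x)) α(x,y)`. -/
def nlDstar (d k : ℕ) (A : EuclideanSpace ℝ (Fin d) → EuclideanSpace ℝ (Fin d) → Fin k → ℝ)
    (u : EuclideanSpace ℝ (Fin d) → ℝ) (x y : EuclideanSpace ℝ (Fin d)) : Fin k → ℝ :=
  fun i => -(u y - u x) * A x y i

/-- The nonlocal divergence operator:
`D(ν)(x) = ∫_{ℝ^d} (ν(x,y) + ν(y,x)) · α(x,y) dy`. -/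
def nlDiv (d k : ℕ) (A : EuclideanSpace ℝ (Fin d) → EuclideanSpace ℝ (Fin d) → Fin k → ℝ)
    (ν : EuclideanSpace ℝ (Fin d) → EuclideanSpace ℝ (Fin d) → Fin k → ℝ)
    (x : EuclideanSpace ℝ (Fin d)) : ℝ :=
  ∫ y, dotProduct (fun i => ν x y i + ν y x i) (A x y)

/-- The kernel `γ(x,y) = α(x,y) · (Θ(x,y) · α(x,y))`. -/
def kernelOf (d k : ℕ) (A : EuclideanSpace ℝ (Fin d) → EuclideanSpace ℝ (Fin d) → Fin k → ℝ)
    (Θ : EuclideanSpace ℝ (Fin d) → EuclideanSpace ℝ (Fin d) → Matrix (Fin k) (Fin k) ℝ)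
    (x y : EuclideanSpace ℝ (Fin d)) : ℝ :=
  dotProduct (A x y) ((Θ x y).mulVec (A x y))

/-- The nonlocal diffusion operator `(L f)(x) = 2 ∫_{ℝ^d} (f(y) - f(x)) γ(x,y) dy`. -/
def nonlocalOp (d : ℕ) (γ : EuclideanSpace ℝ (Fin d) → EuclideanSpace ℝ (Fin d) → ℝ)
    (f : EuclideanSpace ℝ (Fin d) → ℝ) (x : EuclideanSpace ℝ (Fin d)) : ℝ :=
  2 * ∫ y, (f y - f x) * γ x y

/-- For a scalar function `u : ℝ^d → ℝ`,
`D(Θ·D*u)(x) = -2 ∫_{ℝ^d} (u(y) - u(x)) α(x,y)·(Θ(x,y)·α(x,y)) dy` for all `x`;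
consequently, with the kernel `γ(x,y) = α(x,y)·(Θ(x,y)·α(x,y))`, one has
`-Lu = D(Θ·D*u)`, where `(Lu)(x) = 2 ∫_{ℝ^d} (u(y) - u(x)) γ(x,y) dy`. -/
theorem nlDiv_theta_Dstar_eq
    (d k : ℕ)
    (A : EuclideanSpace ℝ (Fin d) → EuclideanSpace ℝ (Fin d) → Fin k → ℝ)
    (hA_anti : ∀ x y, A x y = fun i => -(A y x i))
    (Θ : EuclideanSpace ℝ (Fin d) → EuclideanSpace ℝ (Fin d) → Matrix (Fin k) (Fin k) ℝ)
    (hΘ_symm_args : ∀ x y, Θ x y = Θ y x)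
    (hΘ_symm : ∀ x y, (Θ x y).IsSymm)
    (hΘ_posdef : ∀ x y, (Θ x y).PosDef)
    (u : EuclideanSpace ℝ (Fin d) → ℝ) :
    (∀ x, nlDiv d k A (fun a b => (Θ a b).mulVec (nlDstar d k A u a b)) x
        = -2 * ∫ y, (u y - u x) * kernelOf d k A Θ x y) ∧
    (∀ x, -(nonlocalOp d (kernelOf d k A Θ) u x)
        = nlDiv d k A (fun a b => (Θ a b).mulVec (nlDstar d k A u a b)) x) := by
  have key : ∀ x y, dotProduct
      (fun i => (Θ x y).mulVec (nlDstar d k A u x y) i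
              + (Θ y x).mulVec (nlDstar d k A u y x) i) (A x y)
      = -2 * ((u y - u x) * kernelOf d k A Θ x y) := by
    intro x y
    have h1 : nlDstar d k A u x y = (-(u y - u x)) • A x y := by
      funext i; simp [nlDstar]
    have h2 : nlDstar d k A u y x = (-(u y - u x)) • A x y := by
      funext i
      have := congrFun (hA_anti y x) i
      simp [nlDstar, this]
      ring
    have hfun : (fun i => (Θ x y).mulVec (nlDstar d k A u x y) i
              + (Θ y x).mulVec (nlDstar d k A u y x) i)
        = (-2 * (u y - u x)) • (Θ x y).mulVec (A x y) := by
      funext i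
      rw [h1, h2, ← hΘ_symm_args x y, Matrix.mulVec_smul]
      simp
      ring
    rw [hfun, smul_dotProduct, dotProduct_comm]
    simp [kernelOf]
    ring
  have part1 : ∀ x, nlDiv d k A (fun a b => (Θ a b).mulVec (nlDstar d k A u a b)) x
      = -2 * ∫ y, (u y - u x) * kernelOf d k A Θ x y := by
    intro x
    unfold nlDiv
    simp_rw [key x]
    exact integral_const_mul _ _
  refine ⟨part1, fun x => ?_⟩
  rw [part1 x]
  unfold nonlocalOp
  ring
end
end
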